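/- Let α be a unital partial action of a group G on a unital algebra A (so each ideal A_g = 1_g A for a central idempotent 1_g, and α_g : A_{g⁻¹} → A_g is a unital algebra isomorphism). Then the partial skew group algebra A ⋊_α G = ⊕_{g∈G} A_g δ_g with multiplication (a_g δ_g)(b_h δ_h) = a_g α_g(b_h 1_{g⁻¹}) δ_{gh} is an associative unital algebra with unit 1_A δ_e. -/

import Mathlib

/-- A unital partial action of a group `G` on a unital `k`-algebra `A`:
each domain `A_g = e g * A` is an ideal generated by a central idempotent
`e g`, with `k`-linear unital algebra isomorphisms
`act g : A_{g⁻¹} → A_g` (encoded as total linear maps, constrained on the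
ideals) satisfying the partial action axioms. -/
structure UnitalPartialAction (G : Type*) [Group G] (k : Type*) [CommRing k]
    (A : Type*) [Ring A] [Algebra k A] where
  e : G → A
  act : G → A →ₗ[k] A
  e_idem : ∀ g : G, e g * e g = e g
  e_central : ∀ (g : G) (a : A), e g * a = a * e g
  e_one : e 1 = 1
  act_one : ∀ a : A, act 1 a = a
  mem_act : ∀ (g : G) (a : A), e g⁻¹ * a = a → e g * act g a = act g a
  act_unit : ∀ g : G, act g (e g⁻¹) = e g
  act_mul : ∀ (g : G) (a b : A), e g⁻¹ * a = a → e g⁻¹ * b = b →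
      act g (a * b) = act g a * act g b
  act_inv : ∀ (g : G) (a : A), e g⁻¹ * a = a → act g⁻¹ (act g a) = a
  dom_comp : ∀ (g h : G) (a : A), e h⁻¹ * a = a → e g⁻¹ * act h a = act h a →
      e (g * h)⁻¹ * a = a
  act_comp : ∀ (g h : G) (a : A), e h⁻¹ * a = a → e g⁻¹ * act h a = act h a →
      act g (act h a) = act (g * h) a

variable {G : Type*} [Group G] {k : Type*} [CommRing k]
  {A : Type*} [Ring A] [Algebra k A]

/-- The multiplication of the partial skew group algebra
`A ⋊_α G = ⊕_{g ∈ G} A_g δ_g`, encoded on finitely supported functions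
`G →₀ A`: `(a_g δ_g)(b_h δ_h) = a_g α_g(b_h 1_{g⁻¹}) δ_{gh}`. -/
noncomputable def skewMul (α : UnitalPartialAction G k A) (f f' : G →₀ A) : G →₀ A :=
  f.sum fun g a => f'.sum fun h b => Finsupp.single (g * h) (a * α.act g (α.e g⁻¹ * b))

/-- Membership in `⊕_{g ∈ G} A_g δ_g`: the `g`-th coefficient lies in the
ideal `A_g = e g * A`. -/
def memSkew (α : UnitalPartialAction G k A) (f : G →₀ A) : Prop :=
  ∀ g : G, α.e g * f g = f g

namespace UnitalPartialAction

variable (α : UnitalPartialAction G k A)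

lemma fix_mul_self (g : G) (c : A) : α.e g * (α.e g * c) = α.e g * c := by
  rw [← mul_assoc, α.e_idem]

lemma fix_mul_left (g h : G) {c : A} (hc : α.e h * c = c) :
    α.e h * (α.e g * c) = α.e g * c := by
  rw [← mul_assoc, α.e_central h (α.e g), mul_assoc, hc]

lemma idem_mul_mul (g : G) (b t : A) :
    (α.e g * b) * (α.e g * t) = α.e g * (b * t) := by
  rw [mul_assoc, ← mul_assoc b, ← α.e_central, ← mul_assoc, ← mul_assoc, α.e_idem,
    mul_assoc]

lemma act_inv' (g : G) (a : A) (h : α.e g * a = a) : α.act g (α.act g⁻¹ a) = a := by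
  have h2 := α.act_inv g⁻¹ a (by rw [inv_inv]; exact h)
  rwa [inv_inv] at h2

/-- `α_g(1_{g⁻¹} 1_s) = 1_g 1_{gs}`. -/
lemma key_idem (g s : G) : α.act g (α.e g⁻¹ * α.e s) = α.e g * α.e (g * s) := by
  set x := α.e g⁻¹ * α.e s with hxdef
  have hxg : α.e g⁻¹ * x = x := α.fix_mul_self g⁻¹ (α.e s)
  have hxs : α.e s * x = x := by
    rw [hxdef, α.e_central s, mul_assoc, α.e_idem]
  set u := α.act g x with hudef
  have hug : α.e g * u = u := α.mem_act g x hxg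
  have huinv : α.act g⁻¹ u = x := α.act_inv g x hxg
  have hugs : α.e (g * s) * u = u := by
    have h := α.dom_comp s⁻¹ g⁻¹ u (by rw [inv_inv]; exact hug)
      (by rw [inv_inv, huinv]; exact hxs)
    rwa [mul_inv_rev, inv_inv, inv_inv] at h
  set a := α.e g * α.e (g * s) with hadef
  have hag : α.e g * a = a := α.fix_mul_self g (α.e (g * s))
  have hags : α.e (g * s) * a = a := by
    rw [hadef, α.e_central (g * s), mul_assoc, α.e_idem]
  set v := α.act g⁻¹ a with hvdef
  have hvg : α.e g⁻¹ * v = v := α.mem_act g⁻¹ a (by rw [inv_inv]; exact hag)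
  have hva : α.act g v = a := α.act_inv' g a hag
  have hvs : α.e s * v = v := by
    have h := α.dom_comp (s⁻¹ * g⁻¹) g v hvg
      (by rw [mul_inv_rev, inv_inv, inv_inv, hva]; exact hags)
    rwa [inv_mul_cancel_right, inv_inv] at h
  have hxv : x * v = v := by rw [hxdef, mul_assoc, hvs, hvg]
  have h1 : α.act g (x * v) = u * a := by rw [α.act_mul g x v hxg hvg, hva]
  rw [hxv, hva] at h1
  have h2 : u * a = u := by
    rw [hadef, ← mul_assoc, ← α.e_central g u, hug, ← α.e_central (g * s) u, hugs]
  exact (h1.trans h2).symm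

/-- `α_g(1_{g⁻¹} α_h(1_{h⁻¹} c)) = α_{gh}(1_{(gh)⁻¹} 1_{h⁻¹} c)`. -/
lemma key_comp (g h : G) (c : A) :
    α.act g (α.e g⁻¹ * α.act h (α.e h⁻¹ * c)) =
      α.act (g * h) (α.e (g * h)⁻¹ * (α.e h⁻¹ * c)) := by
  set x := α.e h⁻¹ * c with hxdef
  have hxh : α.e h⁻¹ * x = x := α.fix_mul_self h⁻¹ c
  set w := α.act h x with hwdef
  have hwh : α.e h * w = w := α.mem_act h x hxh
  set y := α.e g⁻¹ * w with hydef
  have hyg : α.e g⁻¹ * y = y := α.fix_mul_self g⁻¹ w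
  have hyh : α.e h * y = y := α.fix_mul_left g⁻¹ h hwh
  set z := α.act h⁻¹ y with hzdef
  have hzh : α.e h⁻¹ * z = z := α.mem_act h⁻¹ y (by rw [inv_inv]; exact hyh)
  have hzy : α.act h z = y := α.act_inv' h y hyh
  have hcomp : α.act g y = α.act (g * h) z := by
    have h2 := α.act_comp g h z hzh (by rw [hzy]; exact hyg)
    rwa [hzy] at h2
  have hy2 : (α.e h * α.e g⁻¹) * w = y := by rw [mul_assoc]; exact hyh
  have hz2 : z = α.e (g * h)⁻¹ * x := by
    have hfac := α.act_mul h⁻¹ (α.e h * α.e g⁻¹) w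
      (by rw [inv_inv]; exact α.fix_mul_self h (α.e g⁻¹))
      (by rw [inv_inv]; exact hwh)
    have h3 : α.act h⁻¹ (α.e h * α.e g⁻¹) = α.e h⁻¹ * α.e (h⁻¹ * g⁻¹) := by
      have := α.key_idem h⁻¹ g⁻¹
      rwa [inv_inv] at this
    have h4 : α.act h⁻¹ w = x := α.act_inv h x hxh
    rw [h3, h4, ← mul_inv_rev] at hfac
    calc z = α.act h⁻¹ ((α.e h * α.e g⁻¹) * w) := by rw [hy2]
      _ = α.e h⁻¹ * α.e (g * h)⁻¹ * x := hfac
      _ = α.e h⁻¹ * (α.e (g * h)⁻¹ * x) := by rw [mul_assoc]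
      _ = α.e (g * h)⁻¹ * x := α.fix_mul_left (g * h)⁻¹ h⁻¹ hxh
  rw [hcomp, hz2]

/-- `1_g α_{gh}(1_{(gh)⁻¹} c) = α_{gh}(1_{(gh)⁻¹} 1_{h⁻¹} c)`. -/
lemma e_mul_act (g h : G) (c : A) :
    α.e g * α.act (g * h) (α.e (g * h)⁻¹ * c) =
      α.act (g * h) (α.e (g * h)⁻¹ * (α.e h⁻¹ * c)) := by
  have harg : α.e (g * h)⁻¹ * (α.e h⁻¹ * c) =
      (α.e (g * h)⁻¹ * α.e h⁻¹) * (α.e (g * h)⁻¹ * c) :=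
    (α.idem_mul_mul (g * h)⁻¹ (α.e h⁻¹) c).symm
  have hmul := α.act_mul (g * h) (α.e (g * h)⁻¹ * α.e h⁻¹) (α.e (g * h)⁻¹ * c)
    (α.fix_mul_self (g * h)⁻¹ (α.e h⁻¹)) (α.fix_mul_self (g * h)⁻¹ c)
  have hk : α.act (g * h) (α.e (g * h)⁻¹ * α.e h⁻¹) = α.e (g * h) * α.e g := by
    have := α.key_idem (g * h) h⁻¹
    rwa [mul_inv_cancel_right] at this
  have hmem : α.e (g * h) * α.act (g * h) (α.e (g * h)⁻¹ * c) =
      α.act (g * h) (α.e (g * h)⁻¹ * c) :=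
    α.mem_act (g * h) _ (α.fix_mul_self (g * h)⁻¹ c)
  rw [harg, hmul, hk, α.e_central (g * h) (α.e g), mul_assoc, hmem]

/-- The core of associativity on single coefficients. -/
lemma assoc_core (g h : G) (b c : A) :
    α.act g (α.e g⁻¹ * b) * α.act (g * h) (α.e (g * h)⁻¹ * c) =
      α.act g (α.e g⁻¹ * (b * α.act h (α.e h⁻¹ * c))) := by
  have h1 : α.e g⁻¹ * (b * α.act h (α.e h⁻¹ * c)) =
      (α.e g⁻¹ * b) * (α.e g⁻¹ * α.act h (α.e h⁻¹ * c)) :=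
    (α.idem_mul_mul g⁻¹ b _).symm
  have hmem : α.e g * α.act g (α.e g⁻¹ * b) = α.act g (α.e g⁻¹ * b) :=
    α.mem_act g _ (α.fix_mul_self g⁻¹ b)
  calc α.act g (α.e g⁻¹ * b) * α.act (g * h) (α.e (g * h)⁻¹ * c)
      = (α.e g * α.act g (α.e g⁻¹ * b)) * α.act (g * h) (α.e (g * h)⁻¹ * c) := by
        rw [hmem]
    _ = α.act g (α.e g⁻¹ * b) * (α.e g * α.act (g * h) (α.e (g * h)⁻¹ * c)) := by
        rw [α.e_central g (α.act g (α.e g⁻¹ * b)), mul_assoc]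
    _ = α.act g (α.e g⁻¹ * b) * α.act (g * h) (α.e (g * h)⁻¹ * (α.e h⁻¹ * c)) := by
        rw [α.e_mul_act g h c]
    _ = α.act g (α.e g⁻¹ * b) * α.act g (α.e g⁻¹ * α.act h (α.e h⁻¹ * c)) := by
        rw [← α.key_comp g h c]
    _ = α.act g ((α.e g⁻¹ * b) * (α.e g⁻¹ * α.act h (α.e h⁻¹ * c))) :=
        (α.act_mul g _ _ (α.fix_mul_self g⁻¹ b) (α.fix_mul_self g⁻¹ _)).symm
    _ = α.act g (α.e g⁻¹ * (b * α.act h (α.e h⁻¹ * c))) := by rw [← h1]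

/-- each product term lies in `A_{gh}`. -/
lemma mem_term (g h : G) (a b : A) (hb : α.e h * b = b) :
    α.e (g * h) * (a * α.act g (α.e g⁻¹ * b)) = a * α.act g (α.e g⁻¹ * b) := by
  have hx : α.e g⁻¹ * (α.e g⁻¹ * b) = α.e g⁻¹ * b := α.fix_mul_self g⁻¹ b
  have hxh : α.e h * (α.e g⁻¹ * b) = α.e g⁻¹ * b := α.fix_mul_left g⁻¹ h hb
  set y := α.act g (α.e g⁻¹ * b) with hydef
  have hyg : α.e g * y = y := α.mem_act g _ hx
  have hinv : α.act g⁻¹ y = α.e g⁻¹ * b := α.act_inv g _ hx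
  have h1 := α.dom_comp h⁻¹ g⁻¹ y (by rw [inv_inv]; exact hyg)
    (by rw [inv_inv, hinv]; exact hxh)
  rw [mul_inv_rev, inv_inv, inv_inv] at h1
  rw [← mul_assoc, α.e_central (g * h) a, mul_assoc, h1]

lemma single_mul_single (g h : G) (a b : A) :
    skewMul α (Finsupp.single g a) (Finsupp.single h b) =
      Finsupp.single (g * h) (a * α.act g (α.e g⁻¹ * b)) := by
  unfold skewMul
  rw [Finsupp.sum_single_index (by simp), Finsupp.sum_single_index (by simp)]

lemma skewMul_zero (f : G →₀ A) : skewMul α f 0 = 0 := by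
  unfold skewMul; simp

lemma zero_skewMul (f : G →₀ A) : skewMul α 0 f = 0 := by
  unfold skewMul; simp

lemma skewMul_add (f f₁ f₂ : G →₀ A) :
    skewMul α f (f₁ + f₂) = skewMul α f f₁ + skewMul α f f₂ := by
  unfold skewMul
  rw [← Finsupp.sum_add]
  refine Finsupp.sum_congr fun g _ => ?_
  exact Finsupp.sum_add_index' (fun h => by simp)
    (fun h b₁ b₂ => by simp [mul_add, Finsupp.single_add])

lemma add_skewMul (f₁ f₂ f : G →₀ A) :
    skewMul α (f₁ + f₂) f = skewMul α f₁ f + skewMul α f₂ f := by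
  unfold skewMul
  exact Finsupp.sum_add_index' (fun g => by simp)
    (fun g a₁ a₂ => by simp [add_mul, Finsupp.single_add, Finsupp.sum_add])

lemma assoc_sss (g h l : G) (a b c : A) :
    skewMul α (skewMul α (Finsupp.single g a) (Finsupp.single h b)) (Finsupp.single l c) =
      skewMul α (Finsupp.single g a) (skewMul α (Finsupp.single h b) (Finsupp.single l c)) := by
  rw [α.single_mul_single, α.single_mul_single, α.single_mul_single, α.single_mul_single,
    mul_assoc a, α.assoc_core g h b c, mul_assoc g h l]

lemma assoc_ss (g h : G) (a b : A) (f'' : G →₀ A) :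
    skewMul α (skewMul α (Finsupp.single g a) (Finsupp.single h b)) f'' =
      skewMul α (Finsupp.single g a) (skewMul α (Finsupp.single h b) f'') := by
  induction f'' using Finsupp.induction with
  | zero => simp only [α.skewMul_zero]
  | single_add l c f hl hc ih =>
      simp only [α.skewMul_add]
      rw [ih, α.assoc_sss]

lemma assoc_s (g : G) (a : A) (f' f'' : G →₀ A) :
    skewMul α (skewMul α (Finsupp.single g a) f') f'' =
      skewMul α (Finsupp.single g a) (skewMul α f' f'') := by
  induction f' using Finsupp.induction with
  | zero => simp only [α.skewMul_zero, α.zero_skewMul]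
  | single_add h b f hh hb ih =>
      simp only [α.skewMul_add, α.add_skewMul]
      rw [ih, α.assoc_ss]

lemma skewMul_assoc (f f' f'' : G →₀ A) :
    skewMul α (skewMul α f f') f'' = skewMul α f (skewMul α f' f'') := by
  induction f using Finsupp.induction with
  | zero => simp only [α.zero_skewMul]
  | single_add g a f hg ha ih =>
      simp only [α.add_skewMul]
      rw [ih, α.assoc_s]

lemma one_skewMul (f : G →₀ A) : skewMul α (Finsupp.single (1 : G) (1 : A)) f = f := by
  unfold skewMul
  rw [Finsupp.sum_single_index (by simp)]
  simp only [one_mul, inv_one, α.e_one, α.act_one]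
  exact Finsupp.sum_single f

lemma skewMul_one (f : G →₀ A) (hf : memSkew α f) :
    skewMul α f (Finsupp.single (1 : G) (1 : A)) = f := by
  unfold skewMul
  refine Eq.trans (Finsupp.sum_congr fun g hg => ?_) (Finsupp.sum_single f)
  rw [Finsupp.sum_single_index (by simp)]
  rw [mul_one, mul_one, α.act_unit, ← α.e_central, hf g]

lemma memSkew_skewMul (f f' : G →₀ A) (hf : memSkew α f) (hf' : memSkew α f') :
    memSkew α (skewMul α f f') := by
  classical
  intro p
  unfold skewMul
  simp only [Finsupp.sum_apply, Finsupp.mul_sum]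
  refine Finsupp.sum_congr fun g hg => Finsupp.sum_congr fun h hh => ?_
  rw [Finsupp.single_apply]
  by_cases hp : g * h = p
  · rw [if_pos hp]
    subst hp
    exact α.mem_term g h (f g) (f' h) (hf' h)
  · rw [if_neg hp, mul_zero]

end UnitalPartialAction

/-- The partial skew group algebra of a unital partial action is an
associative unital algebra with unit `1_A δ_e`. -/
theorem stmt8 (α : UnitalPartialAction G k A) :
    (∀ f f', memSkew α f → memSkew α f' → memSkew α (skewMul α f f')) ∧
    (∀ f f' f'', memSkew α f → memSkew α f' → memSkew α f'' →
      skewMul α (skewMul α f f') f'' = skewMul α f (skewMul α f' f'')) ∧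
    (memSkew α (Finsupp.single (1 : G) (1 : A))) ∧
    (∀ f, memSkew α f →
      skewMul α (Finsupp.single (1 : G) (1 : A)) f = f ∧
      skewMul α f (Finsupp.single (1 : G) (1 : A)) = f) ∧
    (∀ f f₁ f₂, skewMul α f (f₁ + f₂) = skewMul α f f₁ + skewMul α f f₂) ∧
    (∀ f f₁ f₂, skewMul α (f₁ + f₂) f = skewMul α f₁ f + skewMul α f₂ f) := by
  refine ⟨α.memSkew_skewMul, fun f f' f'' _ _ _ => α.skewMul_assoc f f' f'', ?_,
    fun f hf => ⟨α.one_skewMul f, α.skewMul_one f hf⟩, α.skewMul_add,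
    fun f f₁ f₂ => α.add_skewMul f₁ f₂ f⟩
  classical
  intro g
  rw [Finsupp.single_apply]
  by_cases h : (1 : G) = g
  · rw [if_pos h, ← h, α.e_one, one_mul]
  · rw [if_neg h, mul_zero]
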